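/- Let m, n ≥ 2 be natural numbers and fix a family of permutations σ : Fin m → Equiv.Perm (Fin n). For a parameter pair (b, g) ∈ (Fin (m−1) → ℝ) × (Fin (n−1) → ℝ), define β : Fin m → ℝ by β i = b i for i < m−1 and β (m−1) = 1 − ∑_i b i, and define γ : Fin n → ℝ analogously from g. Define a(y, x) = β x · γ(σ x y) and A(y) = ∑_{x} a(y, x). Let S ⊆ (Fin (m−1) → ℝ) × (Fin (n−1) → ℝ) be the set of parameters (b, g) such that all of the following hold: (i) β x > 0 for all x and γ y ≥ 0 for all y (so β and γ are pmfs with β of full support); (ii) A(y) > 0 for all y (the marginal of Y has full support); (iii) the rows of the forward channel are not all equal, i.e., there exist x, x', y with γ(σ x y) ≠ γ(σ x' y) (X and Y are not independent); (iv) the reverse channel is a uniform channel, i.e., there exists a family ρ : Fin n → Equiv.Perm (Fin m) with a(0, x)/A(0) = a(y, ρ y x)/A(y) for all y ∈ Fin n and x ∈ Fin m. Then S has Lebesgue measure zero in ℝ^{m−1} × ℝ^{n−1} (i.e., its volume with respect to the product Lebesgue measure is 0). -/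

import Mathlib

open Finset MeasureTheory


open MvPolynomial in
lemma mvpoly_zero_set_null : ∀ (k : ℕ) (P : MvPolynomial (Fin k) ℝ), P ≠ 0 →
    volume {x : Fin k → ℝ | eval x P = 0} = 0 := by
  intro k
  induction k with
  | zero =>
    intro P hP
    obtain ⟨c, rfl⟩ := MvPolynomial.C_surjective (Fin 0) P
    have hc : c ≠ 0 := fun h => hP (by simp [h])
    have : {x : Fin 0 → ℝ | eval x (C c) = 0} = ∅ := by
      ext x; simp [hc]
    rw [this]; exact measure_empty
  | succ k ih =>
    intro P hP
    set Q := finSuccEquiv ℝ k P with hQdef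
    have hQ0 : Q ≠ 0 := by
      intro h
      exact hP ((map_eq_zero_iff _ (finSuccEquiv ℝ k).injective).mp h)
    obtain ⟨i, hi⟩ : ∃ i, Q.coeff i ≠ 0 := by
      by_contra h
      push_neg at h
      exact hQ0 (Polynomial.ext fun j => by simp [h j])
    -- transfer to ℝ × (Fin k → ℝ)
    set e := MeasurableEquiv.piFinSuccAbove (fun _ : Fin (k+1) => ℝ) 0 with hedef
    have hmp : MeasurePreserving e.symm volume volume :=
      (volume_preserving_piFinSuccAbove (fun _ : Fin (k+1) => ℝ) 0).symm e
    have key : volume (e.symm ⁻¹' {x : Fin (k+1) → ℝ | eval x P = 0}) =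
        volume {x : Fin (k+1) → ℝ | eval x P = 0} :=
      hmp.measure_preimage_equiv _
    rw [← key]
    have hpre : e.symm ⁻¹' {x : Fin (k+1) → ℝ | eval x P = 0} =
        {q : ℝ × (Fin k → ℝ) | Polynomial.eval q.1 (Polynomial.map (eval q.2) Q) = 0} := by
      ext ⟨a, s⟩
      have : (e.symm (a, s) : Fin (k+1) → ℝ) = Fin.cons a s := by
        simp [hedef, MeasurableEquiv.piFinSuccAbove, Fin.insertNthEquiv, Fin.insertNth_zero]
      simp only [Set.mem_preimage, Set.mem_setOf_eq, this, eval_eq_eval_mv_eval']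
      exact Iff.rfl
    rw [hpre]
    -- split into two null pieces
    set N := {s : Fin k → ℝ | eval s (Q.coeff i) = 0} with hNdef
    have hN : volume N = 0 := ih _ hi
    have hsub : {q : ℝ × (Fin k → ℝ) | Polynomial.eval q.1 (Polynomial.map (eval q.2) Q) = 0} ⊆
        (Set.univ ×ˢ N) ∪ {q : ℝ × (Fin k → ℝ) |
          eval q.2 (Q.coeff i) ≠ 0 ∧ Polynomial.eval q.1 (Polynomial.map (eval q.2) Q) = 0} := by
      rintro ⟨a, s⟩ hq
      by_cases hs : eval s (Q.coeff i) = 0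
      · exact Or.inl ⟨Set.mem_univ _, hs⟩
      · exact Or.inr ⟨hs, hq⟩
    refine measure_mono_null hsub (measure_union_null ?_ ?_)
    · rw [Measure.volume_eq_prod, Measure.prod_prod, hN, mul_zero]
    · -- swap and use Fubini
      have hswap : {q : ℝ × (Fin k → ℝ) |
            eval q.2 (Q.coeff i) ≠ 0 ∧ Polynomial.eval q.1 (Polynomial.map (eval q.2) Q) = 0} =
          Prod.swap ⁻¹' {q : (Fin k → ℝ) × ℝ |
            eval q.1 (Q.coeff i) ≠ 0 ∧ Polynomial.eval q.2 (Polynomial.map (eval q.1) Q) = 0} := by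
        ext ⟨a, s⟩; simp [Set.mem_setOf_eq]
      rw [hswap, Measure.volume_eq_prod]
      have hMeas : MeasurableSet {q : (Fin k → ℝ) × ℝ |
          eval q.1 (Q.coeff i) ≠ 0 ∧ Polynomial.eval q.2 (Polynomial.map (eval q.1) Q) = 0} := by
        have hc1 : Continuous fun q : (Fin k → ℝ) × ℝ => eval q.1 (Q.coeff i) :=
          (MvPolynomial.continuous_eval (Q.coeff i)).comp continuous_fst
        have hc2 : Continuous fun q : (Fin k → ℝ) × ℝ =>
            Polynomial.eval q.2 (Polynomial.map (eval q.1) Q) := by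
          have : ∀ q : (Fin k → ℝ) × ℝ, Polynomial.eval q.2 (Polynomial.map (eval q.1) Q) =
              ∑ j ∈ range (Q.natDegree + 1), eval q.1 (Q.coeff j) * q.2 ^ j := by
            intro q
            rw [Polynomial.eval_eq_sum_range' (lt_of_le_of_lt
              (Polynomial.natDegree_map_le) (Nat.lt_succ_self _))]
            exact Finset.sum_congr rfl fun j _ => by rw [Polynomial.coeff_map]
          rw [continuous_congr fun q => (this q)]
          exact continuous_finset_sum _ fun j _ =>
            ((MvPolynomial.continuous_eval _).comp continuous_fst).mul (continuous_snd.pow j)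
        exact ((hc1.measurable (measurableSet_singleton 0)).compl).inter
          (hc2.measurable (measurableSet_singleton 0))
      rw [(Measure.measurePreserving_swap).measure_preimage hMeas.nullMeasurableSet]
      rw [Measure.measure_prod_null hMeas]
      refine Filter.Eventually.of_forall fun s => ?_
      by_cases hs : eval s (Q.coeff i) = 0
      · have : (Prod.mk s ⁻¹' {q : (Fin k → ℝ) × ℝ |
            eval q.1 (Q.coeff i) ≠ 0 ∧ Polynomial.eval q.2 (Polynomial.map (eval q.1) Q) = 0}) = ∅ := by
          ext a; simp [hs]
        simp [this]
      · have hne : Polynomial.map (eval s) Q ≠ 0 := by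
          intro h
          apply hs
          rw [← Polynomial.coeff_map (eval s) i, h, Polynomial.coeff_zero]
        have : (Prod.mk s ⁻¹' {q : (Fin k → ℝ) × ℝ |
            eval q.1 (Q.coeff i) ≠ 0 ∧ Polynomial.eval q.2 (Polynomial.map (eval q.1) Q) = 0}) ⊆
            {a : ℝ | (Polynomial.map (eval s) Q).IsRoot a} := by
          intro a ha; exact ha.2
        exact measure_mono_null this ((Polynomial.finite_setOf_isRoot hne).measure_zero _)

open MvPolynomial in
lemma mvpoly_prod_null (a b : ℕ) (P : MvPolynomial (Fin a ⊕ Fin b) ℝ) (hP : P ≠ 0) :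
    volume {p : (Fin a → ℝ) × (Fin b → ℝ) | eval (Sum.elim p.1 p.2) P = 0} = 0 := by
  set e1 := MeasurableEquiv.sumPiEquivProdPi (fun _ : Fin a ⊕ Fin b => ℝ) with he1
  have hmp1 : MeasurePreserving e1 volume volume :=
    volume_measurePreserving_sumPiEquivProdPi _
  rw [← hmp1.measure_preimage_equiv]
  have hpre : e1 ⁻¹' {p : (Fin a → ℝ) × (Fin b → ℝ) | eval (Sum.elim p.1 p.2) P = 0} =
      {x : Fin a ⊕ Fin b → ℝ | eval x P = 0} := by
    ext x
    simp only [Set.mem_preimage, Set.mem_setOf_eq]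
    have : Sum.elim (fun i => x (Sum.inl i)) (fun i => x (Sum.inr i)) = x := by
      funext i; cases i <;> rfl
    constructor
    · intro h; rw [← this]; exact h
    · intro h
      show eval (Sum.elim (e1 x).1 (e1 x).2) P = 0
      have h1 : (e1 x).1 = fun i => x (Sum.inl i) := rfl
      have h2 : (e1 x).2 = fun i => x (Sum.inr i) := rfl
      rw [h1, h2, this]; exact h
  rw [hpre]
  -- transfer to Fin (a + b)
  set e2 := MeasurableEquiv.piCongrLeft (fun _ : Fin a ⊕ Fin b => ℝ) finSumFinEquiv.symm with he2
  have hmp2 : MeasurePreserving e2 volume volume :=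
    volume_measurePreserving_piCongrLeft _ _
  rw [← hmp2.measure_preimage_equiv]
  have hpre2 : e2 ⁻¹' {x : Fin a ⊕ Fin b → ℝ | eval x P = 0} =
      {y : Fin (a + b) → ℝ | eval y (rename finSumFinEquiv P) = 0} := by
    ext y
    simp only [Set.mem_preimage, Set.mem_setOf_eq, eval_rename]
    have : (e2 y : Fin a ⊕ Fin b → ℝ) = y ∘ finSumFinEquiv := by
      funext i
      rw [he2]
      show (MeasurableEquiv.piCongrLeft (fun _ : Fin a ⊕ Fin b => ℝ) finSumFinEquiv.symm) y i
        = y (finSumFinEquiv i)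
      rw [show i = finSumFinEquiv.symm (finSumFinEquiv i) by simp]
      rw [MeasurableEquiv.piCongrLeft_apply_apply]
      simp
    rw [this]
  rw [hpre2]
  exact mvpoly_zero_set_null _ _ (fun h =>
    hP ((map_eq_zero_iff _ (rename_injective _ finSumFinEquiv.injective)).mp h))

lemma ucm_key {m n : ℕ} (hm : 2 ≤ m) (hn : 2 ≤ n) (σ : Fin m → Equiv.Perm (Fin n))
    (ρ : Fin n → Equiv.Perm (Fin m)) (u v : Fin m) (y0 : Fin n) (hw : σ u y0 ≠ σ v y0)
    (H : ∀ (β : Fin m → ℝ) (γ : Fin n → ℝ), (∑ x, β x) = 1 → (∑ y, γ y) = 1 →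
      ∀ (x : Fin m) (y : Fin n),
        β x * γ (σ x ⟨0, Nat.lt_of_lt_of_le (by norm_num) hn⟩) * (∑ x', β x' * γ (σ x' y)) =
        β (ρ y x) * γ (σ (ρ y x) y) * (∑ x', β x' * γ (σ x' ⟨0, Nat.lt_of_lt_of_le (by norm_num) hn⟩))) : False := by
  classical
  set y₀ : Fin n := ⟨0, by omega⟩ with hy₀
  have hn0 : (n : ℝ) ≠ 0 := by positivity
  -- Step 1 : ρ is the identity
  have hρ : ∀ (y : Fin n) (x : Fin m), ρ y x = x := by
    intro y x
    have hsum1 : (∑ w : Fin m, (if w = x then (1:ℝ) else 0)) = 1 := by simp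
    have hsum2 : (∑ _y : Fin n, (n:ℝ)⁻¹) = 1 := by
      rw [Finset.sum_const, Finset.card_univ, Fintype.card_fin, nsmul_eq_mul]
      field_simp
    have := H (fun w => if w = x then (1:ℝ) else 0) (fun _ => (n:ℝ)⁻¹) hsum1 hsum2 x y
    by_contra hne
    simp only [if_pos rfl, if_neg hne, ite_mul, one_mul, zero_mul,
      Finset.sum_ite_eq', Finset.mem_univ, if_true] at this
    have hpos : (0:ℝ) < (n:ℝ)⁻¹ := by positivity
    nlinarith
  -- Step 2 : the cross-ratio relations
  have hrel : ∀ (γ : Fin n → ℝ), (∑ y, γ y) = 1 → ∀ (a b : Fin m) (y : Fin n), a ≠ b →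
      γ (σ a y₀) * γ (σ b y) = γ (σ a y) * γ (σ b y₀) := by
    intro γ hγ a b y hab
    set β : Fin m → ℝ := fun w => (if w = a then (2:ℝ)⁻¹ else 0) + (if w = b then (2:ℝ)⁻¹ else 0)
      with hβ
    have hsum1 : (∑ w, β w) = 1 := by
      rw [hβ, Finset.sum_add_distrib]
      simp only [Finset.sum_ite_eq', Finset.mem_univ, if_true]
      norm_num
    have hE := H β γ hsum1 hγ a y
    rw [hρ y a] at hE
    have hβa : β a = 2⁻¹ := by simp [hβ, hab]
    have h1 : (∑ x', β x' * γ (σ x' y)) = 2⁻¹ * γ (σ a y) + 2⁻¹ * γ (σ b y) := by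
      rw [hβ]
      simp only [add_mul, ite_mul, zero_mul, Finset.sum_add_distrib,
        Finset.sum_ite_eq', Finset.mem_univ, if_true]
    have h2 : (∑ x', β x' * γ (σ x' y₀)) = 2⁻¹ * γ (σ a y₀) + 2⁻¹ * γ (σ b y₀) := by
      rw [hβ]
      simp only [add_mul, ite_mul, zero_mul, Finset.sum_add_distrib,
        Finset.sum_ite_eq', Finset.mem_univ, if_true]
    rw [hβa, h1, h2] at hE
    linear_combination 4 * hE
  -- Step 3 : contradiction
  have huv : u ≠ v := fun h => hw (by rw [h])
  by_cases hp : σ u y₀ = σ v y₀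
  · -- the three indices p = σ u y₀, q = σ v y0, r = σ u y0 are pairwise distinct
    have hy0 : y0 ≠ y₀ := by
      intro h; exact hw (by rw [h, hp])
    have hrp : σ u y0 ≠ σ u y₀ := fun h => hy0 ((σ u).injective h)
    have hqp : σ v y0 ≠ σ u y₀ := fun h => hy0 ((σ v).injective (h.trans hp))
    have hqr : σ v y0 ≠ σ u y0 := Ne.symm hw
    set γ : Fin n → ℝ := fun w => (if w = σ u y₀ then (1:ℝ) else 0) +
      (if w = σ v y0 then (1:ℝ) else 0) - (if w = σ u y0 then (1:ℝ) else 0) with hγ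
    have hsum : (∑ w, γ w) = 1 := by
      rw [hγ]
      rw [Finset.sum_sub_distrib, Finset.sum_add_distrib]
      simp only [Finset.sum_ite_eq', Finset.mem_univ, if_true]
      norm_num
    have hthis := hrel γ hsum u v y0 huv
    have g1 : γ (σ u y₀) = 1 := by
      rw [hγ]; simp only [if_pos rfl, if_neg (Ne.symm hqp), if_neg (Ne.symm hrp)]; norm_num
    have g2 : γ (σ v y0) = 1 := by
      rw [hγ]; simp only [if_pos rfl, if_neg hqp, if_neg hqr]; norm_num
    have g3 : γ (σ u y0) = -1 := by
      rw [hγ]; simp only [if_pos rfl, if_neg hrp, if_neg (Ne.symm hqr)]; norm_num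
    have g4 : γ (σ v y₀) = 1 := by
      rw [← hp]; exact g1
    rw [g1, g2, g3, g4] at hthis
    norm_num at hthis
  · -- choose y with σ v y = σ u y₀
    set y : Fin n := (σ v).symm (σ u y₀) with hy
    have hvy : σ v y = σ u y₀ := (σ v).apply_symm_apply _
    have hne : σ u y ≠ σ u y₀ := by
      intro h
      have : y = y₀ := (σ u).injective h
      exact hp (by rw [← hvy, this])
    set γ : Fin n → ℝ := fun w => if w = σ u y₀ then (1:ℝ) else 0 with hγ
    have hsum : (∑ w, γ w) = 1 := by rw [hγ]; simp
    have hthis := hrel γ hsum u v y huv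
    have g1 : γ (σ u y₀) = 1 := by rw [hγ]; simp
    have g2 : γ (σ v y) = 1 := by rw [hγ, hvy]; simp
    have g3 : γ (σ u y) = 0 := by rw [hγ]; simp [hne]
    rw [g1, g2, g3] at hthis
    norm_num at hthis

lemma sum_front {k : ℕ} (hk : 1 ≤ k) (f : Fin k → ℝ) :
    (∑ j : Fin (k-1), f ⟨j.1, by omega⟩) = (∑ x, f x) - f ⟨k-1, by omega⟩ := by
  obtain ⟨k', rfl⟩ : ∃ k', k = k' + 1 := ⟨k-1, by omega⟩
  have h2 : (∑ j : Fin (k'+1-1), f ⟨j.1, by omega⟩) = ∑ j : Fin k', f (Fin.castSucc j) := rfl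
  rw [h2, Fin.sum_univ_castSucc]
  have h1 : f ⟨k'+1-1, by omega⟩ = f (Fin.last k') := rfl
  rw [h1]
  ring

lemma realize {k : ℕ} (hk : 2 ≤ k) (f : Fin k → ℝ) (hf : (∑ x, f x) = 1)
    (b : Fin (k-1) → ℝ) (hb : ∀ j : Fin (k-1), b j = f ⟨j.1, by omega⟩) (i : Fin k) :
    (if h : (i : ℕ) < k - 1 then b ⟨(i : ℕ), h⟩ else 1 - ∑ j, b j) = f i := by
  split
  · next h =>
    rw [hb]
  · next h =>
    have hsum : (∑ j, b j) = ∑ j : Fin (k-1), f ⟨j.1, by omega⟩ :=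
      Finset.sum_congr rfl fun j _ => hb j
    rw [hsum, sum_front (by omega) f, hf]
    have hik : (i : ℕ) = k - 1 := by have := i.isLt; omega
    have hi : (⟨k-1, by omega⟩ : Fin k) = i := Fin.ext (by simp [hik])
    rw [hi]
    ring

noncomputable def rV (k : ℕ) (b : Fin (k-1) → ℝ) : Fin k → ℝ :=
  fun i => if h : (i : ℕ) < k - 1 then b ⟨(i : ℕ), h⟩ else 1 - ∑ j, b j

open MvPolynomial in
noncomputable def ucmB (m n : ℕ) (i : Fin m) : MvPolynomial (Fin (m-1) ⊕ Fin (n-1)) ℝ :=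
  if h : (i : ℕ) < m - 1 then X (Sum.inl ⟨(i : ℕ), h⟩)
  else 1 - ∑ j : Fin (m-1), X (Sum.inl j)

open MvPolynomial in
noncomputable def ucmG (m n : ℕ) (i : Fin n) : MvPolynomial (Fin (m-1) ⊕ Fin (n-1)) ℝ :=
  if h : (i : ℕ) < n - 1 then X (Sum.inr ⟨(i : ℕ), h⟩)
  else 1 - ∑ j : Fin (n-1), X (Sum.inr j)

open MvPolynomial in
noncomputable def ucmP (m n : ℕ) (σ : Fin m → Equiv.Perm (Fin n)) (ρ : Fin n → Equiv.Perm (Fin m))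
    (y₀ : Fin n) (x : Fin m) (y : Fin n) : MvPolynomial (Fin (m-1) ⊕ Fin (n-1)) ℝ :=
  ucmB m n x * ucmG m n (σ x y₀) * (∑ x', ucmB m n x' * ucmG m n (σ x' y)) -
  ucmB m n (ρ y x) * ucmG m n (σ (ρ y x) y) * (∑ x', ucmB m n x' * ucmG m n (σ x' y₀))

lemma ucmB_eval (m n : ℕ) (p : (Fin (m-1) → ℝ) × (Fin (n-1) → ℝ)) (i : Fin m) :
    MvPolynomial.eval (Sum.elim p.1 p.2) (ucmB m n i) = rV m p.1 i := by
  unfold ucmB rV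
  split <;> simp

lemma ucmG_eval (m n : ℕ) (p : (Fin (m-1) → ℝ) × (Fin (n-1) → ℝ)) (i : Fin n) :
    MvPolynomial.eval (Sum.elim p.1 p.2) (ucmG m n i) = rV n p.2 i := by
  unfold ucmG rV
  split <;> simp

lemma ucmP_eval (m n : ℕ) (σ : Fin m → Equiv.Perm (Fin n)) (ρ : Fin n → Equiv.Perm (Fin m))
    (y₀ : Fin n) (x : Fin m) (y : Fin n) (p : (Fin (m-1) → ℝ) × (Fin (n-1) → ℝ)) :
    MvPolynomial.eval (Sum.elim p.1 p.2) (ucmP m n σ ρ y₀ x y) =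
      rV m p.1 x * rV n p.2 (σ x y₀) * (∑ x', rV m p.1 x' * rV n p.2 (σ x' y)) -
      rV m p.1 (ρ y x) * rV n p.2 (σ (ρ y x) y) * (∑ x', rV m p.1 x' * rV n p.2 (σ x' y₀)) := by
  simp only [ucmP, map_sub, map_mul, map_sum, ucmB_eval, ucmG_eval]


/-- Identifiability of the uniform channel model: the set of parameters
`(b, g)` (parametrizing the cause marginal `β` and the channel vector `γ` by
their first `m-1`, resp. `n-1`, coordinates) for which the forward channel is
the uniform channel given by `σ`, the marginals have full support, `X` and `Y`
are not independent, and the reverse channel is also a uniform channel, has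
Lebesgue measure zero. -/
theorem ucm_identifiability
    (m n : ℕ) (hm : 2 ≤ m) (hn : 2 ≤ n) (σ : Fin m → Equiv.Perm (Fin n)) :
    volume {p : (Fin (m - 1) → ℝ) × (Fin (n - 1) → ℝ) |
      let β : Fin m → ℝ :=
        fun i => if h : (i : ℕ) < m - 1 then p.1 ⟨i, h⟩ else 1 - ∑ j, p.1 j
      let γ : Fin n → ℝ :=
        fun i => if h : (i : ℕ) < n - 1 then p.2 ⟨i, h⟩ else 1 - ∑ j, p.2 j
      let a : Fin n → Fin m → ℝ := fun y x => β x * γ (σ x y)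
      let A : Fin n → ℝ := fun y => ∑ x, a y x
      (∀ x, 0 < β x) ∧ (∀ y, 0 ≤ γ y) ∧ (∀ y, 0 < A y) ∧
      (∃ x x' y, γ (σ x y) ≠ γ (σ x' y)) ∧
      (∃ ρ : Fin n → Equiv.Perm (Fin m), ∀ (y : Fin n) (x : Fin m),
        a ⟨0, by omega⟩ x / A ⟨0, by omega⟩ = a y (ρ y x) / A y)} = 0 := by
  classical
  set y₀ : Fin n := ⟨0, by omega⟩ with hy₀
  by_cases hσ : ∀ x x' : Fin m, σ x = σ x'
  · have hempty : {p : (Fin (m - 1) → ℝ) × (Fin (n - 1) → ℝ) |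
      let β : Fin m → ℝ :=
        fun i => if h : (i : ℕ) < m - 1 then p.1 ⟨i, h⟩ else 1 - ∑ j, p.1 j
      let γ : Fin n → ℝ :=
        fun i => if h : (i : ℕ) < n - 1 then p.2 ⟨i, h⟩ else 1 - ∑ j, p.2 j
      let a : Fin n → Fin m → ℝ := fun y x => β x * γ (σ x y)
      let A : Fin n → ℝ := fun y => ∑ x, a y x
      (∀ x, 0 < β x) ∧ (∀ y, 0 ≤ γ y) ∧ (∀ y, 0 < A y) ∧
      (∃ x x' y, γ (σ x y) ≠ γ (σ x' y)) ∧
      (∃ ρ : Fin n → Equiv.Perm (Fin m), ∀ (y : Fin n) (x : Fin m),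
        a ⟨0, by omega⟩ x / A ⟨0, by omega⟩ = a y (ρ y x) / A y)} = ∅ := by
      ext p
      simp only [Set.mem_setOf_eq, Set.mem_empty_iff_false, iff_false]
      intro hp
      have hp' : (∀ x, 0 < rV m p.1 x) ∧ (∀ y, 0 ≤ rV n p.2 y) ∧
          (∀ y, 0 < ∑ x, rV m p.1 x * rV n p.2 (σ x y)) ∧
          (∃ x x' y, rV n p.2 (σ x y) ≠ rV n p.2 (σ x' y)) ∧
          (∃ ρ : Fin n → Equiv.Perm (Fin m), ∀ (y : Fin n) (x : Fin m),
            rV m p.1 x * rV n p.2 (σ x y₀) / (∑ x', rV m p.1 x' * rV n p.2 (σ x' y₀)) =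
            rV m p.1 (ρ y x) * rV n p.2 (σ (ρ y x) y) /
              (∑ x', rV m p.1 x' * rV n p.2 (σ x' y))) := hp
      obtain ⟨-, -, -, ⟨x, x', y, hne⟩, -⟩ := hp'
      exact hne (by rw [hσ x x'])
    rw [hempty]
    exact measure_empty
  · push_neg at hσ
    obtain ⟨u, v, huv⟩ := hσ
    obtain ⟨y0, hw⟩ : ∃ y0, σ u y0 ≠ σ v y0 := by
      by_contra h; push_neg at h; exact huv (Equiv.ext h)
    have hsub : {p : (Fin (m - 1) → ℝ) × (Fin (n - 1) → ℝ) |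
      let β : Fin m → ℝ :=
        fun i => if h : (i : ℕ) < m - 1 then p.1 ⟨i, h⟩ else 1 - ∑ j, p.1 j
      let γ : Fin n → ℝ :=
        fun i => if h : (i : ℕ) < n - 1 then p.2 ⟨i, h⟩ else 1 - ∑ j, p.2 j
      let a : Fin n → Fin m → ℝ := fun y x => β x * γ (σ x y)
      let A : Fin n → ℝ := fun y => ∑ x, a y x
      (∀ x, 0 < β x) ∧ (∀ y, 0 ≤ γ y) ∧ (∀ y, 0 < A y) ∧
      (∃ x x' y, γ (σ x y) ≠ γ (σ x' y)) ∧
      (∃ ρ : Fin n → Equiv.Perm (Fin m), ∀ (y : Fin n) (x : Fin m),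
        a ⟨0, by omega⟩ x / A ⟨0, by omega⟩ = a y (ρ y x) / A y)} ⊆
        ⋃ ρ : Fin n → Equiv.Perm (Fin m),
          {p : (Fin (m-1) → ℝ) × (Fin (n-1) → ℝ) |
            ∀ (x : Fin m) (y : Fin n),
              MvPolynomial.eval (Sum.elim p.1 p.2) (ucmP m n σ ρ y₀ x y) = 0} := by
      intro p hp
      have hp' : (∀ x, 0 < rV m p.1 x) ∧ (∀ y, 0 ≤ rV n p.2 y) ∧
          (∀ y, 0 < ∑ x, rV m p.1 x * rV n p.2 (σ x y)) ∧
          (∃ x x' y, rV n p.2 (σ x y) ≠ rV n p.2 (σ x' y)) ∧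
          (∃ ρ : Fin n → Equiv.Perm (Fin m), ∀ (y : Fin n) (x : Fin m),
            rV m p.1 x * rV n p.2 (σ x y₀) / (∑ x', rV m p.1 x' * rV n p.2 (σ x' y₀)) =
            rV m p.1 (ρ y x) * rV n p.2 (σ (ρ y x) y) /
              (∑ x', rV m p.1 x' * rV n p.2 (σ x' y))) := hp
      obtain ⟨-, -, hA, -, ⟨ρ, hρ⟩⟩ := hp'
      refine Set.mem_iUnion.mpr ⟨ρ, ?_⟩
      intro x y
      rw [ucmP_eval]
      have h1 := hρ y x
      rw [div_eq_div_iff (ne_of_gt (hA y₀)) (ne_of_gt (hA y))] at h1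
      rw [sub_eq_zero]
      exact h1
    refine measure_mono_null hsub (measure_iUnion_null fun ρ => ?_)
    have hkey : ¬ ∀ (p : (Fin (m-1) → ℝ) × (Fin (n-1) → ℝ)) (x : Fin m) (y : Fin n),
        MvPolynomial.eval (Sum.elim p.1 p.2) (ucmP m n σ ρ y₀ x y) = 0 := by
      intro hall
      refine ucm_key hm hn σ ρ u v y0 hw ?_
      intro β γ hβ hγ x y
      set p : (Fin (m-1) → ℝ) × (Fin (n-1) → ℝ) :=
        (fun j => β ⟨j.1, by omega⟩, fun j => γ ⟨j.1, by omega⟩) with hpdef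
      have hb : ∀ i, rV m p.1 i = β i := fun i => realize hm β hβ p.1 (fun j => rfl) i
      have hg : ∀ i, rV n p.2 i = γ i := fun i => realize hn γ hγ p.2 (fun j => rfl) i
      have h0 := hall p x y
      rw [ucmP_eval] at h0
      simp only [hb, hg] at h0
      linarith
    push_neg at hkey
    obtain ⟨q, x1, y1, hq⟩ := hkey
    refine measure_mono_null (fun p hp => hp x1 y1)
      (mvpoly_prod_null _ _ (ucmP m n σ ρ y₀ x1 y1) ?_)
    intro h0
    exact hq (by rw [h0]; simp)
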